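/- Let ν > 1 and 1/ν + 1/ν² < F < 2. Then (−ν−1+√(8F²ν⁴+ν²+2ν+1))/(2ν²(ν+1)) > F√(ν²+ν+1)/(√6·ν(ν+1)). Equivalently, H_* > H_c, where H_* := (−ν−1+√(8F²ν⁴+ν²+2ν+1))/(2ν²(ν+1)) and H_c := F√(ν²+ν+1)/(√6·ν(ν+1)). -/

import Mathlib

set_option maxHeartbeats 1000000


open Real

/-- Appendix inequality 1: in the discontinuous-profile regime, `H_* > H_c`, where
`H_*` is the subshock left state and `H_c` the positive critical point of the cubic
`f_{F,H_R}`. -/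
theorem Hstar_gt_Hc (F nu : ℝ) (hnu : 1 < nu)
    (hFlow : 1 / nu + 1 / nu ^ 2 < F) (hF2 : F < 2) :
    (-nu - 1 + Real.sqrt (8 * F ^ 2 * nu ^ 4 + nu ^ 2 + 2 * nu + 1)) /
        (2 * nu ^ 2 * (nu + 1)) >
      F * Real.sqrt (nu ^ 2 + nu + 1) / (Real.sqrt 6 * nu * (nu + 1)) := by
  have hν0 : (0:ℝ) < nu := by linarith
  have hν1 : (0:ℝ) < nu + 1 := by linarith
  -- F * nu^2 > nu + 1
  have hFν : nu + 1 < F * nu ^ 2 := by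
    have h := mul_lt_mul_of_pos_right hFlow (by positivity : (0:ℝ) < nu ^ 2)
    have : (1 / nu + 1 / nu ^ 2) * nu ^ 2 = nu + 1 := by
      field_simp
    linarith [this ▸ h]
  have hF0 : 0 < F := by nlinarith
  set a : ℝ := 11 * nu ^ 2 - nu - 1 with ha_def
  have ha : 0 < a := by nlinarith
  -- square roots
  set s1 := Real.sqrt (8 * F ^ 2 * nu ^ 4 + nu ^ 2 + 2 * nu + 1) with hs1_def
  set s2 := Real.sqrt (nu ^ 2 + nu + 1) with hs2_def
  set s6 := Real.sqrt 6 with hs6_def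
  have hs1sq : s1 ^ 2 = 8 * F ^ 2 * nu ^ 4 + nu ^ 2 + 2 * nu + 1 := by
    rw [hs1_def, Real.sq_sqrt (by positivity)]
  have hs2sq : s2 ^ 2 = nu ^ 2 + nu + 1 := by
    rw [hs2_def, Real.sq_sqrt (by positivity)]
  have hs6sq : s6 ^ 2 = 6 := by
    rw [hs6_def, Real.sq_sqrt (by norm_num)]
  have hs1nn : 0 ≤ s1 := Real.sqrt_nonneg _
  have hs2nn : 0 ≤ s2 := Real.sqrt_nonneg _
  have hs6nn : 0 ≤ s6 := Real.sqrt_nonneg _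
  have hs6pos : 0 < s6 := by
    rw [hs6_def]; exact Real.sqrt_pos.mpr (by norm_num)
  -- key polynomial inequality
  have hK : 6 * (nu + 1) ^ 2 * (nu ^ 2 + nu + 1) < F ^ 2 * nu ^ 2 * a ^ 2 := by
    have h1 : (nu + 1) ^ 2 < (F * nu ^ 2) ^ 2 := by
      have := mul_lt_mul_of_pos_left hFν hν1
      nlinarith
    have h2 : 6 * nu ^ 2 * (nu ^ 2 + nu + 1) < a ^ 2 := by
      rw [ha_def]
      nlinarith [mul_lt_mul_of_pos_right hnu (pow_pos hν0 3),
        mul_lt_mul_of_pos_right hnu (pow_pos hν0 2), sq_nonneg nu, hnu]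
    have h3 := mul_lt_mul_of_pos_right h1 (by positivity : (0:ℝ) < a ^ 2)
    have h4 := mul_lt_mul_of_pos_left h2 (by positivity : (0:ℝ) < (nu + 1) ^ 2)
    nlinarith
  -- first de-squaring
  have h2 : (nu + 1) * (s2 * s6) < F * nu * a := by
    have hrpos : 0 < F * nu * a := by positivity
    refine lt_of_pow_lt_pow_left₀ 2 (le_of_lt hrpos) ?_
    have : ((nu + 1) * (s2 * s6)) ^ 2 = (nu + 1) ^ 2 * (s2 ^ 2 * s6 ^ 2) := by ring
    rw [this, hs2sq, hs6sq]
    nlinarith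
  -- second de-squaring
  have h : (nu + 1) * s6 + 2 * nu * F * s2 < s1 * s6 := by
    refine lt_of_pow_lt_pow_left₀ 2 (by positivity) ?_
    have h2' := mul_lt_mul_of_pos_left h2 (by positivity : (0:ℝ) < 4 * nu * F)
    have eL : ((nu + 1) * s6 + 2 * nu * F * s2) ^ 2
        = (nu + 1) ^ 2 * s6 ^ 2 + 4 * nu * F * ((nu + 1) * (s2 * s6))
          + 4 * nu ^ 2 * F ^ 2 * s2 ^ 2 := by ring
    have eR : (s1 * s6) ^ 2 = s1 ^ 2 * s6 ^ 2 := by ring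
    rw [eL, eR, hs1sq, hs2sq, hs6sq]
    have eA : 4 * nu * F * (F * nu * a) = 4 * nu ^ 2 * F ^ 2 * (11 * nu ^ 2 - nu - 1) := by
      rw [ha_def]; ring
    rw [eA] at h2'
    nlinarith [h2']
  rw [gt_iff_lt, div_lt_div_iff₀ (by positivity) (by positivity)]
  nlinarith [mul_lt_mul_of_pos_right h (by positivity : (0:ℝ) < nu * (nu + 1))]
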